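/- Let H be a monoid such that the reduced quotient H_red = H/H^× is finitely generated. Then R̄(H) = {ρ(a) : a a nonunit of H with the property that ρ(a^t) = ρ(a) for all t ∈ ℕ}. -/

import Mathlib

open Filter Topology

/-- The set of factorization lengths of `a`: the set of all `k` such that `a` is a
product of `k` atoms (irreducibles); by convention it is `{0}` for units. -/
noncomputable def lengthSet (H : Type*) [CommMonoid H] (a : H) : Set ℕ :=
  open Classical in
  if IsUnit a then {0}
  else {k | ∃ f : Fin k → H, (∀ i, Irreducible (f i)) ∧ a = ∏ i, f i}

/-- The elasticity `ρ(a) = max L(a) / min L(a)` of an element of a BF-monoid,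
with `ρ(a) = 1` for units. -/
noncomputable def elasticity (H : Type*) [CommMonoid H] (a : H) : ℝ :=
  open Classical in
  if IsUnit a then 1
  else ((sSup (lengthSet H a) : ℕ) : ℝ) / ((sInf (lengthSet H a) : ℕ) : ℝ)

/-- The elasticity `ρ(H) = sup {ρ(a) : a ∈ H} ∈ ℝ≥1 ∪ {∞}` of the monoid `H`. -/
noncomputable def monoidElasticity (H : Type*) [CommMonoid H] : EReal :=
  ⨆ a : H, ((elasticity H a : ℝ) : EReal)

/-- The set `R̄(H)` of asymptotic elasticities `ρ̄(a) = lim_{n → ∞} ρ(aⁿ)`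
of nonunits `a ∈ H` (membership requires the limit to exist). -/
def asympSet (H : Type*) [CommMonoid H] : Set EReal :=
  {r | ∃ a : H, ¬ IsUnit a ∧
    Tendsto (fun n : ℕ => ((elasticity H (a ^ n) : ℝ) : EReal)) atTop (nhds r)}

/-- `H` is locally finitely generated: for every `a ∈ H` there are only finitely many
atoms, up to associates, dividing some power of `a`. -/
def LocallyFinitelyGenerated (H : Type*) [CommMonoid H] : Prop :=
  ∀ a : H, {u : Associates H | Irreducible u ∧ ∃ n : ℕ, u ∣ Associates.mk (a ^ n)}.Finite

/-- `H` is a BF-monoid: atomic (every nonunit has a factorization into atoms) and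
all sets of lengths are finite. -/
def IsBFMonoid (H : Type*) [CommMonoid H] : Prop :=
  (∀ a : H, ¬ IsUnit a → (lengthSet H a).Nonempty) ∧ ∀ a : H, (lengthSet H a).Finite

/-- `(k, ℓ) ≠ (0,0)` is a nice pair with respect to `(a, b)` if
`max L((aᵏbˡ)ᵗ) = t · max L(aᵏbˡ)` and `min L((aᵏbˡ)ᵗ) = t · min L(aᵏbˡ)` for all `t ∈ ℕ`. -/
def IsNicePair (H : Type*) [CommMonoid H] (a b : H) (k ℓ : ℕ) : Prop :=
  ¬ (k = 0 ∧ ℓ = 0) ∧ ∀ t : ℕ, 0 < t →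
    sSup (lengthSet H ((a ^ k * b ^ ℓ) ^ t)) = t * sSup (lengthSet H (a ^ k * b ^ ℓ)) ∧
    sInf (lengthSet H ((a ^ k * b ^ ℓ) ^ t)) = t * sInf (lengthSet H (a ^ k * b ^ ℓ))

/-- `H` is strongly primary: `H ≠ H^×` and for every nonunit `a` there is `n ∈ ℕ`
such that every product of `n` nonunits of `H` is divisible by `a`. -/
def StronglyPrimary (H : Type*) [CommMonoid H] : Prop :=
  (∃ a : H, ¬ IsUnit a) ∧ ∀ a : H, ¬ IsUnit a → ∃ n : ℕ, 0 < n ∧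
    ∀ f : Fin n → H, (∀ i, ¬ IsUnit (f i)) → a ∣ ∏ i, f i

/-- `H` is half-factorial: atomic and `|L(a)| = 1` for every `a ∈ H`. -/
def IsHalfFactorial (H : Type*) [CommMonoid H] : Prop :=
  ∀ a : H, ∃ k : ℕ, lengthSet H a = {k}


namespace S8

variable {H : Type*} [CancelCommMonoid H]

theorem lengthSet_of_not_isUnit {c : H} (hc : ¬ IsUnit c) :
    lengthSet H c = {k | ∃ f : Fin k → H, (∀ i, Irreducible (f i)) ∧ c = ∏ i, f i} := by
  simp only [lengthSet, if_neg hc]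

theorem mem_lengthSet_iff_multiset {c : H} (hc : ¬ IsUnit c) {k : ℕ} :
    k ∈ lengthSet H c ↔
      ∃ m : Multiset H, (∀ x ∈ m, Irreducible x) ∧ Multiset.card m = k ∧ m.prod = c := by
  rw [lengthSet_of_not_isUnit hc]
  constructor
  · rintro ⟨f, hf, rfl⟩
    refine ⟨(List.ofFn f : Multiset H), ?_, ?_, ?_⟩
    · intro x hx
      rw [Multiset.mem_coe, List.mem_ofFn] at hx
      obtain ⟨i, rfl⟩ := hx
      exact hf i
    · simp
    · simp [List.prod_ofFn]
  · rintro ⟨m, hm, hcard, hprod⟩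
    obtain ⟨l, rfl⟩ : ∃ l : List H, (l : Multiset H) = m := ⟨m.toList, m.coe_toList⟩
    rw [Multiset.coe_card] at hcard
    subst hcard
    refine ⟨fun i => l.get i, fun i => hm _ (by simp [List.get_mem]), ?_⟩
    rw [Multiset.prod_coe] at hprod
    rw [← hprod, ← List.prod_ofFn, List.ofFn_get]

theorem not_isUnit_prod {M : Type*} [CommMonoid M] {m : Multiset M} (h0 : m ≠ 0)
    (h : ∀ x ∈ m, ¬ IsUnit x) : ¬ IsUnit m.prod := by
  obtain ⟨x, hx⟩ := Multiset.exists_mem_of_ne_zero h0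
  intro hu
  exact h x hx (isUnit_of_dvd_unit (Multiset.dvd_prod hx) hu)

theorem assoc_mul_right_cancel {x y z : Associates H} (h : x * z = y * z) : x = y := by
  obtain ⟨a, rfl⟩ := Associates.mk_surjective x
  obtain ⟨b, rfl⟩ := Associates.mk_surjective y
  obtain ⟨c, rfl⟩ := Associates.mk_surjective z
  rw [Associates.mk_mul_mk, Associates.mk_mul_mk, Associates.mk_eq_mk_iff_associated] at h
  obtain ⟨u, hu⟩ := h
  rw [Associates.mk_eq_mk_iff_associated]
  refine ⟨u, mul_right_cancel (b := c) ?_⟩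
  rw [mul_right_comm] at hu
  exact hu

theorem assoc_mul_left_cancel {x y z : Associates H} (h : z * x = z * y) : x = y := by
  rw [mul_comm z x, mul_comm z y] at h
  exact assoc_mul_right_cancel h

theorem assoc_eq_one_of_mul_eq_self {x y : Associates H} (h : x * y = x) : y = 1 := by
  apply assoc_mul_left_cancel (z := x)
  rw [h, mul_one]


structure AtomSetup (H : Type*) [CancelCommMonoid H] where
  U : Finset (Associates H)
  irr : ∀ u ∈ U, Irreducible u
  gen : ∀ z : Associates H, z ∈ Submonoid.closure (U : Set (Associates H))

theorem exists_atomSetup_aux :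
    ∀ n (S : Finset (Associates H)), S.card ≤ n →
      Submonoid.closure (S : Set (Associates H)) = ⊤ → Nonempty (AtomSetup H) := by
  classical
  intro n
  induction n with
  | zero =>
    intro S hcard hS
    have hS0 : S = ∅ := Finset.card_eq_zero.mp (Nat.le_zero.mp hcard)
    subst hS0
    exact ⟨⟨∅, by simp, fun z => by rw [hS]; exact Submonoid.mem_top z⟩⟩
  | succ n ih =>
    intro S hcard hS
    by_cases h : ∃ s ∈ S, Submonoid.closure ((S.erase s : Finset (Associates H)) :
        Set (Associates H)) = ⊤
    · obtain ⟨s, hs, hcl⟩ := h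
      refine ih (S.erase s) ?_ hcl
      have := Finset.card_erase_of_mem hs
      omega
    · push_neg at h
      have hnot : ∀ s ∈ S, s ∉ Submonoid.closure ((S.erase s : Finset (Associates H)) :
          Set (Associates H)) := by
        intro s hs hmem
        refine h s hs (le_antisymm le_top ?_)
        rw [← hS]
        refine Submonoid.closure_le.mpr ?_
        intro x hx
        rcases eq_or_ne x s with rfl | hne
        · exact hmem
        · exact Submonoid.subset_closure
            (by rw [Finset.mem_coe] at hx ⊢; exact Finset.mem_erase.mpr ⟨hne, hx⟩)
      have hne1 : ∀ s ∈ S, ¬ IsUnit s := by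
        intro s hs hu
        rw [Associates.isUnit_iff_eq_one] at hu
        apply hnot s hs
        rw [hu]
        exact Submonoid.one_mem _
      refine ⟨⟨S, ?_, fun z => by rw [hS]; exact Submonoid.mem_top z⟩⟩
      intro u hu
      refine ⟨hne1 u hu, ?_⟩
      intro b c hbc
      by_contra hcon
      push_neg at hcon
      obtain ⟨hb, hc⟩ := hcon
      obtain ⟨mb, hmb, hmbp⟩ := Submonoid.exists_multiset_of_mem_closure
        (show b ∈ Submonoid.closure (S : Set (Associates H)) by
          rw [hS]; exact Submonoid.mem_top b)
      obtain ⟨mc, hmc, hmcp⟩ := Submonoid.exists_multiset_of_mem_closure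
        (show c ∈ Submonoid.closure (S : Set (Associates H)) by
          rw [hS]; exact Submonoid.mem_top c)
      have hmb0 : mb ≠ 0 := by
        rintro rfl
        rw [Multiset.prod_zero] at hmbp
        exact hb (hmbp ▸ isUnit_one)
      have hmc0 : mc ≠ 0 := by
        rintro rfl
        rw [Multiset.prod_zero] at hmcp
        exact hc (hmcp ▸ isUnit_one)
      have hmU : ∀ x ∈ mb + mc, x ∈ S := by
        intro x hx
        rcases Multiset.mem_add.mp hx with hx | hx
        · exact Finset.mem_coe.mp (hmb x hx)
        · exact Finset.mem_coe.mp (hmc x hx)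
      have hmprod : (mb + mc).prod = u := by
        rw [Multiset.prod_add, hmbp, hmcp, ← hbc]
      by_cases hum : u ∈ mb + mc
      · have h1 : u * ((mb + mc).erase u).prod = u := by
          rw [← Multiset.prod_cons, Multiset.cons_erase hum, hmprod]
        have h2 : ((mb + mc).erase u).prod = 1 := assoc_eq_one_of_mul_eq_self h1
        have hcard2 : (1:ℕ) ≤ Multiset.card ((mb + mc).erase u) := by
          have hadd : Multiset.card (mb + mc) = Multiset.card mb + Multiset.card mc :=
            Multiset.card_add _ _
          have h1' : 0 < Multiset.card mb := Multiset.card_pos.mpr hmb0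
          have h2' : 0 < Multiset.card mc := Multiset.card_pos.mpr hmc0
          have h3 : Multiset.card ((mb + mc).erase u) = Multiset.card (mb + mc) - 1 := by
            rw [Multiset.card_erase_of_mem hum]; rfl
          omega
        have hne0 : (mb + mc).erase u ≠ 0 := by
          intro h0
          rw [h0] at hcard2
          simp at hcard2
        exact not_isUnit_prod hne0
          (fun x hx => hne1 x (hmU x (Multiset.mem_of_mem_erase hx)))
          (h2 ▸ isUnit_one)
      · apply hnot u hu
        have hmem : (mb + mc).prod ∈ Submonoid.closure ((S.erase u : Finset (Associates H)) :
            Set (Associates H)) := by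
          refine Submonoid.multiset_prod_mem _ _ ?_
          intro x hx
          refine Submonoid.subset_closure ?_
          rw [Finset.mem_coe]
          exact Finset.mem_erase.mpr ⟨fun hxx => hum (by rw [← hxx]; exact hx), hmU x hx⟩
        rwa [hmprod] at hmem

theorem exists_atomSetup (hfg : Monoid.FG (Associates H)) : Nonempty (AtomSetup H) := by
  obtain ⟨S, hS⟩ := Monoid.fg_def.mp hfg
  exact exists_atomSetup_aux S.card S le_rfl hS


end S8

namespace S8
variable {H : Type*} [CancelCommMonoid H]

attribute [local instance] Classical.propDecidable

noncomputable def AtomSetup.phi (T : AtomSetup H) (x : ↥T.U → ℕ) : Associates H :=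
  ∏ u : ↥T.U, (u : Associates H) ^ x u

def AtomSetup.deg (T : AtomSetup H) (x : ↥T.U → ℕ) : ℕ := ∑ u : ↥T.U, x u

variable (T : AtomSetup H)

theorem irr_mk {z : H} : Irreducible (Associates.mk z) ↔ Irreducible z := by
  constructor
  · intro h
    refine ⟨fun hu => h.not_isUnit (Associates.isUnit_mk.mpr hu), ?_⟩
    intro a b hab
    have := h.isUnit_or_isUnit (show Associates.mk z = Associates.mk a * Associates.mk b by
      rw [Associates.mk_mul_mk, ← hab])
    rcases this with h' | h'
    · exact Or.inl (Associates.isUnit_mk.mp h')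
    · exact Or.inr (Associates.isUnit_mk.mp h')
  · intro h
    refine ⟨fun hu => h.not_isUnit (Associates.isUnit_mk.mp hu), ?_⟩
    intro b c hbc
    obtain ⟨b', rfl⟩ := Associates.mk_surjective b
    obtain ⟨c', rfl⟩ := Associates.mk_surjective c
    rw [Associates.mk_mul_mk, Associates.mk_eq_mk_iff_associated] at hbc
    obtain ⟨u, hu⟩ := hbc
    rcases h.isUnit_or_isUnit (show z = b' * (c' * ↑u⁻¹) by
        rw [← mul_assoc, ← hu, mul_assoc, Units.mul_inv, mul_one]) with h' | h'
    · exact Or.inl (Associates.isUnit_mk.mpr h')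
    · exact Or.inr (Associates.isUnit_mk.mpr ((Units.isUnit_mul_units c' u⁻¹).mp h'))


theorem phi_zero : T.phi 0 = 1 := by simp [AtomSetup.phi]

theorem phi_add (x y : ↥T.U → ℕ) : T.phi (x + y) = T.phi x * T.phi y := by
  simp [AtomSetup.phi, pow_add, Finset.prod_mul_distrib]

theorem phi_nsmul (t : ℕ) (x : ↥T.U → ℕ) : T.phi (t • x) = T.phi x ^ t := by
  rw [AtomSetup.phi, AtomSetup.phi, ← Finset.prod_pow]
  refine Finset.prod_congr rfl fun u _ => ?_
  rw [Pi.smul_apply, smul_eq_mul, ← pow_mul, mul_comm]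

theorem deg_zero : T.deg 0 = 0 := by simp [AtomSetup.deg]

theorem deg_add (x y : ↥T.U → ℕ) : T.deg (x + y) = T.deg x + T.deg y := by
  simp [AtomSetup.deg, Finset.sum_add_distrib]

theorem deg_nsmul (t : ℕ) (x : ↥T.U → ℕ) : T.deg (t • x) = t * T.deg x := by
  simp [AtomSetup.deg, Finset.mul_sum]

theorem deg_eq_zero_iff {x : ↥T.U → ℕ} : T.deg x = 0 ↔ x = 0 := by
  rw [AtomSetup.deg, Finset.sum_eq_zero_iff]
  constructor
  · intro h; funext u; exact h u (Finset.mem_univ u)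
  · intro h u _; rw [h]; rfl

theorem phi_eq_one {x : ↥T.U → ℕ} (h : T.phi x = 1) : x = 0 := by
  funext u
  by_contra h0
  have hdvd : (u : Associates H) ∣ T.phi x :=
    dvd_trans (dvd_pow_self _ h0) (Finset.dvd_prod_of_mem _ (Finset.mem_univ u))
  rw [h] at hdvd
  exact (T.irr u u.2).not_isUnit (isUnit_of_dvd_one hdvd)

theorem phi_single (u : ↥T.U) : T.phi (Pi.single u 1) = u := by
  rw [AtomSetup.phi, Finset.prod_eq_single u]
  · rw [Pi.single_eq_same, pow_one]
  · intro v _ hvu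
    rw [Pi.single_eq_of_ne hvu, pow_zero]
  · intro hu; exact absurd (Finset.mem_univ u) hu

theorem deg_single (u : ↥T.U) : T.deg (Pi.single u 1) = 1 := by
  rw [AtomSetup.deg, Finset.sum_eq_single u]
  · rw [Pi.single_eq_same]
  · intro v _ hvu
    rw [Pi.single_eq_of_ne hvu]
  · intro hu; exact absurd (Finset.mem_univ u) hu

theorem rep_of_multiset (m : Multiset (Associates H)) (hm : ∀ y ∈ m, y ∈ T.U) :
    ∃ x, T.phi x = m.prod ∧ T.deg x = Multiset.card m := by
  induction m using Multiset.induction_on with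
  | empty => exact ⟨0, by simp [phi_zero], by simp [deg_zero]⟩
  | cons a m ih =>
    obtain ⟨x, hφ, hd⟩ := ih (fun y hy => hm y (Multiset.mem_cons_of_mem hy))
    have ha : a ∈ T.U := hm a (Multiset.mem_cons_self a m)
    refine ⟨Pi.single (⟨a, ha⟩ : ↥T.U) 1 + x, ?_, ?_⟩
    · rw [phi_add, phi_single, Multiset.prod_cons, hφ]
    · rw [deg_add, deg_single, Multiset.card_cons, hd, add_comm]

theorem exists_rep (z : Associates H) : ∃ x, T.phi x = z := by
  obtain ⟨m, hm, hp⟩ := Submonoid.exists_multiset_of_mem_closure (T.gen z)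
  obtain ⟨x, h1, _⟩ := rep_of_multiset T m (fun y hy => Finset.mem_coe.mp (hm y hy))
  exact ⟨x, h1.trans hp⟩

theorem mem_U_of_irreducible {v : Associates H} (hv : Irreducible v) : v ∈ T.U := by
  obtain ⟨m, hmm, hp⟩ := Submonoid.exists_multiset_of_mem_closure (T.gen v)
  have hm : ∀ y ∈ m, y ∈ T.U := fun y hy => Finset.mem_coe.mp (hmm y hy)
  have hm0 : m ≠ 0 := by
    rintro rfl
    rw [Multiset.prod_zero] at hp
    exact hv.not_isUnit (hp ▸ isUnit_one)
  obtain ⟨y, hy⟩ := Multiset.exists_mem_of_ne_zero hm0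
  have hsplit : v = y * (m.erase y).prod := by
    rw [← Multiset.prod_cons, Multiset.cons_erase hy, hp]
  rcases hv.isUnit_or_isUnit hsplit with h | h
  · exact absurd h (T.irr y (hm y hy)).not_isUnit
  · have h1 : (m.erase y).prod = 1 := (Associates.isUnit_iff_eq_one _).mp h
    have h0 : m.erase y = 0 := by
      by_contra h0
      exact not_isUnit_prod h0
        (fun x hx => (T.irr x (hm x (Multiset.mem_of_mem_erase hx))).not_isUnit)
        (h1 ▸ isUnit_one)
    rw [hsplit, h0, Multiset.prod_zero, mul_one]
    exact hm y hy

theorem card_finsetSum {β γ : Type*} (s : Finset β) (f : β → Multiset γ) :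
    Multiset.card (∑ b ∈ s, f b) = ∑ b ∈ s, Multiset.card (f b) := by
  induction s using Finset.cons_induction with
  | empty => simp
  | cons a s ha ih => simp [Finset.sum_cons, ih]

theorem length_iff {c : H} (hc : ¬ IsUnit c) {k : ℕ} :
    k ∈ lengthSet H c ↔ ∃ x : ↥T.U → ℕ, T.deg x = k ∧ T.phi x = Associates.mk c := by
  rw [mem_lengthSet_iff_multiset hc]
  constructor
  · rintro ⟨m, hm, hcard, hprod⟩
    have hprodmk : (m.map Associates.mk).prod = Associates.mk c := by
      rw [← hprod]
      exact Multiset.prod_hom m Associates.mkMonoidHom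
    have hUmem : ∀ y ∈ m.map Associates.mk, y ∈ T.U := by
      intro y hy
      obtain ⟨z, hz, rfl⟩ := Multiset.mem_map.mp hy
      exact mem_U_of_irreducible T (irr_mk.mpr (hm z hz))
    obtain ⟨x, hφ, hd⟩ := rep_of_multiset T (m.map Associates.mk) hUmem
    exact ⟨x, by rw [hd, Multiset.card_map, hcard], by rw [hφ, hprodmk]⟩
  · rintro ⟨x, hdeg, hφ⟩
    have hwmk : ∀ u : ↥T.U, Associates.mk (Quot.out ((u : Associates H))) = (u : Associates H) :=
      fun u => Associates.quot_out _
    have hwirr : ∀ u : ↥T.U, Irreducible (Quot.out ((u : Associates H))) := by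
      intro u
      rw [← irr_mk, hwmk u]
      exact T.irr u u.2
    set w : ↥T.U → H := fun u => Quot.out ((u : Associates H)) with hwdef
    set m : Multiset H := ∑ u : ↥T.U, Multiset.replicate (x u) (w u) with hmdef
    have hcard : Multiset.card m = T.deg x := by
      rw [hmdef, card_finsetSum]
      exact Finset.sum_congr rfl fun u _ => Multiset.card_replicate _ _
    have hmem : ∀ y ∈ m, ∃ u : ↥T.U, y = w u := by
      intro y hy
      rw [hmdef] at hy
      obtain ⟨u, _, hu⟩ := Multiset.mem_sum.mp hy
      exact ⟨u, Multiset.eq_of_mem_replicate hu⟩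
    have hprod : m.prod = ∏ u : ↥T.U, w u ^ x u := by
      rw [hmdef, Multiset.prod_sum]
      exact Finset.prod_congr rfl fun u _ => Multiset.prod_replicate _ _
    have hassoc : Associates.mk m.prod = Associates.mk c := by
      rw [hprod, ← hφ, AtomSetup.phi, ← Associates.mkMonoidHom_apply, map_prod]
      refine Finset.prod_congr rfl fun u _ => ?_
      rw [map_pow, Associates.mkMonoidHom_apply, hwmk u]
    obtain ⟨ε, hε⟩ := Associates.mk_eq_mk_iff_associated.mp hassoc
    have hk1 : 1 ≤ k := by
      rcases Nat.eq_zero_or_pos k with rfl | h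
      · exfalso
        apply hc
        rw [← Associates.mk_eq_one, ← hφ, (deg_eq_zero_iff T).mp hdeg, phi_zero]
      · exact h
    have hm0 : m ≠ 0 := by
      intro h0
      rw [h0] at hcard
      simp only [Multiset.card_zero] at hcard
      omega
    obtain ⟨y, hy⟩ := Multiset.exists_mem_of_ne_zero hm0
    refine ⟨(y * ε) ::ₘ m.erase y, ?_, ?_, ?_⟩
    · intro z hz
      rcases Multiset.mem_cons.mp hz with rfl | hz'
      · obtain ⟨u, rfl⟩ := hmem y hy
        exact Associated.irreducible ⟨ε, rfl⟩ (hwirr u)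
      · obtain ⟨u, rfl⟩ := hmem _ (Multiset.mem_of_mem_erase hz')
        exact hwirr u
    · have hce : Multiset.card (m.erase y) = Multiset.card m - 1 := by
        rw [Multiset.card_erase_of_mem hy]; rfl
      rw [Multiset.card_cons, hce, hcard, hdeg]
      omega
    · rw [Multiset.prod_cons, mul_right_comm]
      have hyy : y * (m.erase y).prod = m.prod := by
        rw [← Multiset.prod_cons, Multiset.cons_erase hy]
      rw [hyy, hε]

theorem fib_finite (z : Associates H) : {x : ↥T.U → ℕ | T.phi x = z}.Finite := by
  have hanti : IsAntichain (· ≤ ·) {x : ↥T.U → ℕ | T.phi x = z} := by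
    intro x hx y hy hne hle
    apply hne
    have hsub : x + (y - x) = y := by
      funext u
      have hxy : x u ≤ y u := hle u
      simp only [Pi.add_apply, Pi.sub_apply]
      omega
    have h1 : T.phi (y - x) = 1 := by
      apply assoc_eq_one_of_mul_eq_self (x := z)
      calc z * T.phi (y - x) = T.phi x * T.phi (y - x) := by rw [hx]
        _ = T.phi (x + (y - x)) := (phi_add T _ _).symm
        _ = T.phi y := by rw [hsub]
        _ = z := hy
    have h0 : y - x = 0 := phi_eq_one T h1
    rw [h0, add_zero] at hsub
    exact hsub
  have hpwo : Set.IsPWO {x : ↥T.U → ℕ | T.phi x = z} :=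
    (Set.isPWO_univ_iff.mpr inferInstance).mono (Set.subset_univ _)
  exact hanti.finite_of_partiallyWellOrderedOn hpwo

theorem lengthSet_eq_image {c : H} (hc : ¬ IsUnit c) :
    lengthSet H c = T.deg '' {x : ↥T.U → ℕ | T.phi x = Associates.mk c} := by
  ext k
  rw [length_iff T hc]
  constructor
  · rintro ⟨x, hd, hφ⟩; exact ⟨x, hφ, hd⟩
  · rintro ⟨x, hφ, hd⟩; exact ⟨x, hd, hφ⟩

include T in
theorem lengthSet_finite (c : H) : (lengthSet H c).Finite := by
  by_cases hc : IsUnit c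
  · rw [lengthSet, if_pos hc]
    exact Set.finite_singleton 0
  · rw [lengthSet_eq_image T hc]
    exact (fib_finite T _).image _

include T in
theorem lengthSet_nonempty {c : H} (hc : ¬ IsUnit c) : (lengthSet H c).Nonempty := by
  rw [lengthSet_eq_image T hc]
  obtain ⟨x, hx⟩ := exists_rep T (Associates.mk c)
  exact ⟨T.deg x, x, hx, rfl⟩

include T in
theorem one_le_of_mem {c : H} (hc : ¬ IsUnit c) {k : ℕ} (hk : k ∈ lengthSet H c) : 1 ≤ k := by
  rw [length_iff T hc] at hk
  obtain ⟨x, hd, hφ⟩ := hk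
  rcases Nat.eq_zero_or_pos k with rfl | h
  · exfalso
    apply hc
    rw [← Associates.mk_eq_one, ← hφ, (deg_eq_zero_iff T).mp hd, phi_zero]
  · exact h

include T in
theorem sSup_mem_ls {c : H} (hc : ¬ IsUnit c) : sSup (lengthSet H c) ∈ lengthSet H c :=
  Nat.sSup_mem (lengthSet_nonempty T hc) ((lengthSet_finite T c).bddAbove)

include T in
theorem sInf_mem_ls {c : H} (hc : ¬ IsUnit c) : sInf (lengthSet H c) ∈ lengthSet H c :=
  Nat.sInf_mem (lengthSet_nonempty T hc)

theorem elasticity_nonunit {c : H} (hc : ¬ IsUnit c) :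
    elasticity H c = ((sSup (lengthSet H c) : ℕ) : ℝ) / ((sInf (lengthSet H c) : ℕ) : ℝ) := by
  rw [elasticity, if_neg hc]

end S8

namespace S8
variable {H : Type*} [CancelCommMonoid H]
attribute [local instance] Classical.propDecidable

abbrev AtomSetup.W (T : AtomSetup H) : Type _ := ℕ × (↥T.U → ℕ) × (↥T.U → ℕ)

def TT (T : AtomSetup H) (a : H) : Set T.W :=
  {v | T.phi v.2.1 = Associates.mk a ^ v.1 ∧ T.phi v.2.2 = Associates.mk a ^ v.1}

def mu (T : AtomSetup H) (v : T.W) : ℕ := v.1 + T.deg v.2.1 + T.deg v.2.2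

def GG (T : AtomSetup H) (a : H) : Set T.W :=
  {g | g ∈ TT T a ∧ g ≠ 0 ∧ ∀ g' ∈ TT T a, g' ≠ 0 → g' ≤ g → g' = g}

variable (T : AtomSetup H)

theorem mu_zero_iff {v : T.W} : mu T v = 0 ↔ v = 0 := by
  obtain ⟨n, x, y⟩ := v
  constructor
  · intro h
    simp only [mu] at h
    have h1 : n = 0 := by omega
    have h2 : T.deg x = 0 := by omega
    have h3 : T.deg y = 0 := by omega
    rw [Prod.ext_iff, Prod.ext_iff]
    exact ⟨h1, (deg_eq_zero_iff T).mp h2, (deg_eq_zero_iff T).mp h3⟩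
  · rintro h
    rw [Prod.ext_iff, Prod.ext_iff] at h
    obtain ⟨h1, h2, h3⟩ := h
    simp only [mu]
    rw [show n = 0 from h1, show x = 0 from h2, show y = 0 from h3]
    simp [deg_zero]

theorem le_W_iff {w v : T.W} : w ≤ v ↔ w.1 ≤ v.1 ∧ w.2.1 ≤ v.2.1 ∧ w.2.2 ≤ v.2.2 := by
  rw [Prod.le_def, Prod.le_def]

theorem sub_add_cancel_W {w v : T.W} (h : w ≤ v) : w + (v - w) = v := by
  obtain ⟨h1, h2, h3⟩ := (le_W_iff T).mp h
  rw [Prod.ext_iff, Prod.ext_iff]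
  refine ⟨?_, ?_, ?_⟩
  · simp only [Prod.fst_add, Prod.fst_sub]
    omega
  · simp only [Prod.snd_add, Prod.snd_sub, Prod.fst_add, Prod.fst_sub]
    funext u
    have hcu : w.2.1 u ≤ v.2.1 u := h2 u
    simp only [Pi.add_apply, Pi.sub_apply]
    omega
  · simp only [Prod.snd_add, Prod.snd_sub]
    funext u
    have hcu : w.2.2 u ≤ v.2.2 u := h3 u
    simp only [Pi.add_apply, Pi.sub_apply]
    omega

theorem mu_add (v w : T.W) : mu T (v + w) = mu T v + mu T w := by
  simp only [mu, Prod.fst_add, Prod.snd_add, deg_add]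
  omega

theorem deg_mono {x y : ↥T.U → ℕ} (h : x ≤ y) : T.deg x ≤ T.deg y :=
  Finset.sum_le_sum fun u _ => h u

theorem vec_eq_of_le_of_deg_le {x y : ↥T.U → ℕ} (h : x ≤ y) (hd : T.deg y ≤ T.deg x) :
    x = y := by
  by_contra hne
  have hex : ∃ u, x u < y u := by
    by_contra hall
    push_neg at hall
    exact hne (funext fun u => le_antisymm (h u) (hall u))
  obtain ⟨u, hu⟩ := hex
  have : T.deg x < T.deg y :=
    Finset.sum_lt_sum (fun v _ => h v) ⟨u, Finset.mem_univ u, hu⟩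
  omega

theorem eq_of_le_of_mu_le {w v : T.W} (h : w ≤ v) (hm : mu T v ≤ mu T w) : w = v := by
  obtain ⟨h1, h2, h3⟩ := (le_W_iff T).mp h
  have d1 : T.deg w.2.1 ≤ T.deg v.2.1 := deg_mono T h2
  have d2 : T.deg w.2.2 ≤ T.deg v.2.2 := deg_mono T h3
  simp only [mu] at hm
  rw [Prod.ext_iff, Prod.ext_iff]
  refine ⟨by omega, ?_, ?_⟩
  · exact vec_eq_of_le_of_deg_le T h2 (by omega)
  · exact vec_eq_of_le_of_deg_le T h3 (by omega)

theorem TT_sub {a : H} {v w : T.W} (hv : v ∈ TT T a) (hw : w ∈ TT T a) (h : w ≤ v) :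
    v - w ∈ TT T a := by
  obtain ⟨h1, h2, h3⟩ := (le_W_iff T).mp h
  have key : ∀ (x1 x2 : ↥T.U → ℕ) (n1 n2 : ℕ), T.phi x1 = Associates.mk a ^ n1 →
      T.phi x2 = Associates.mk a ^ n2 → x2 ≤ x1 → n2 ≤ n1 →
      T.phi (x1 - x2) = Associates.mk a ^ (n1 - n2) := by
    intro x1 x2 n1 n2 hx1 hx2 hle hn
    have hsum : x2 + (x1 - x2) = x1 := by
      funext u
      have hcu : x2 u ≤ x1 u := hle u
      simp only [Pi.add_apply, Pi.sub_apply]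
      omega
    apply assoc_mul_left_cancel (z := Associates.mk a ^ n2)
    calc Associates.mk a ^ n2 * T.phi (x1 - x2)
        = T.phi x2 * T.phi (x1 - x2) := by rw [hx2]
      _ = T.phi (x2 + (x1 - x2)) := (phi_add T _ _).symm
      _ = T.phi x1 := by rw [hsum]
      _ = Associates.mk a ^ n1 := hx1
      _ = Associates.mk a ^ (n2 + (n1 - n2)) := by rw [Nat.add_sub_cancel' hn]
      _ = Associates.mk a ^ n2 * Associates.mk a ^ (n1 - n2) := pow_add _ _ _
  constructor
  · simp only [Prod.snd_sub, Prod.fst_sub]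
    exact key _ _ _ _ hv.1 hw.1 h2 h1
  · simp only [Prod.snd_sub, Prod.fst_sub]
    exact key _ _ _ _ hv.2 hw.2 h3 h1

theorem exists_min_GG (a : H) {v : T.W} (hv : v ∈ TT T a) (hv0 : v ≠ 0) :
    ∃ g ∈ GG T a, g ≤ v := by
  have hQne : (mu T '' {w | w ∈ TT T a ∧ w ≠ 0 ∧ w ≤ v}).Nonempty :=
    ⟨mu T v, v, ⟨hv, hv0, le_rfl⟩, rfl⟩
  obtain ⟨w, hwQ, hwmu⟩ := Nat.sInf_mem hQne
  refine ⟨w, ⟨hwQ.1, hwQ.2.1, ?_⟩, hwQ.2.2⟩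
  intro g' hg' hg0 hgle
  have hge : mu T w ≤ mu T g' := by
    rw [hwmu]
    exact Nat.sInf_le ⟨g', ⟨hg', hg0, hgle.trans hwQ.2.2⟩, rfl⟩
  exact eq_of_le_of_mu_le T hgle hge

theorem GG_pos {a : H} (ha : ¬ IsUnit a) {g : T.W} (hg : g ∈ GG T a) :
    1 ≤ g.1 ∧ 1 ≤ T.deg g.2.1 ∧ 1 ≤ T.deg g.2.2 := by
  obtain ⟨n, x, y⟩ := g
  obtain ⟨⟨hφ1, hφ2⟩, hg0, _⟩ := hg
  have hn : n ≠ 0 := by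
    intro h0
    subst h0
    rw [pow_zero] at hφ1 hφ2
    apply hg0
    rw [Prod.ext_iff, Prod.ext_iff]
    exact ⟨rfl, phi_eq_one T hφ1, phi_eq_one T hφ2⟩
  have hone : Associates.mk a ^ n ≠ 1 := by
    intro h1
    have hu : IsUnit (Associates.mk a ^ n) := h1 ▸ isUnit_one
    rw [isUnit_pow_iff hn] at hu
    exact ha (Associates.isUnit_mk.mp hu)
  have hx : T.deg x ≠ 0 := by
    intro h0
    rw [(deg_eq_zero_iff T).mp h0, phi_zero] at hφ1
    exact hone hφ1.symm
  have hy : T.deg y ≠ 0 := by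
    intro h0
    rw [(deg_eq_zero_iff T).mp h0, phi_zero] at hφ2
    exact hone hφ2.symm
  exact ⟨Nat.pos_of_ne_zero hn, Nat.pos_of_ne_zero hx, Nat.pos_of_ne_zero hy⟩

theorem GG_finite (a : H) : (GG T a).Finite := by
  have hanti : IsAntichain (· ≤ ·) (GG T a) := by
    intro g1 h1 g2 h2 hne hle
    exact hne (h2.2.2 g1 h1.1 h1.2.1 hle)
  have h1 : (Set.univ : Set ℕ).IsPWO := (Set.isWF_univ_iff.mpr inferInstance).isPWO
  have h2 : (Set.univ : Set (↥T.U → ℕ)).IsPWO :=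
    (Set.isPWO_univ_iff.mpr inferInstance).mono (Set.subset_univ _)
  have h3 : (Set.univ : Set ((↥T.U → ℕ) × (↥T.U → ℕ))).IsPWO := by
    rw [← Set.univ_prod_univ]
    exact h2.prod h2
  have h4 : (Set.univ : Set T.W).IsPWO := by
    rw [← Set.univ_prod_univ]
    exact h1.prod h3
  exact hanti.finite_of_partiallyWellOrderedOn (h4.mono (Set.subset_univ _))

theorem decomp (a : H) : ∀ N (v : T.W), v ∈ TT T a → mu T v ≤ N →
    ∃ c : T.W → ℕ, v = ∑ g ∈ (GG_finite T a).toFinset, c g • g := by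
  classical
  intro N
  induction N with
  | zero =>
    intro v hv hμ
    have hv0 : v = 0 := (mu_zero_iff T).mp (Nat.le_zero.mp hμ)
    exact ⟨0, by simp [hv0]⟩
  | succ N ih =>
    intro v hv hμ
    by_cases hv0 : v = 0
    · exact ⟨0, by simp [hv0]⟩
    · obtain ⟨g, hgG, hgle⟩ := exists_min_GG T a hv hv0
      have hgT := hgG.1
      have hsubT : v - g ∈ TT T a := TT_sub T hv hgT hgle
      have hsplit : g + (v - g) = v := sub_add_cancel_W T hgle
      have hμ' : mu T (v - g) ≤ N := by
        have hadd := mu_add T g (v - g)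
        rw [hsplit] at hadd
        have h2 : 1 ≤ mu T g := by
          rcases Nat.eq_zero_or_pos (mu T g) with h0 | h
          · exact absurd ((mu_zero_iff T).mp h0) hgG.2.1
          · exact h
        omega
      obtain ⟨c, hc⟩ := ih (v - g) hsubT hμ'
      have hgF : g ∈ (GG_finite T a).toFinset := (Set.Finite.mem_toFinset _).mpr hgG
      refine ⟨fun x => c x + (if x = g then 1 else 0), ?_⟩
      have hsum2 : ∑ x ∈ (GG_finite T a).toFinset, (if x = g then 1 else 0) • x = g := by
        have heq : ∀ x ∈ (GG_finite T a).toFinset,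
            (if x = g then 1 else 0) • x = (if x = g then x else 0) := by
          intro x _
          split <;> simp
        rw [Finset.sum_congr rfl heq, Finset.sum_ite_eq' _ g (fun x => x), if_pos hgF]
      calc v = (v - g) + g := by rw [add_comm, hsplit]
        _ = (∑ x ∈ (GG_finite T a).toFinset, c x • x) +
            ∑ x ∈ (GG_finite T a).toFinset, (if x = g then 1 else 0) • x := by
              rw [← hc, hsum2]
        _ = ∑ x ∈ (GG_finite T a).toFinset, (c x + (if x = g then 1 else 0)) • x := by
              rw [← Finset.sum_add_distrib]
              exact Finset.sum_congr rfl fun x _ => (add_smul _ _ _).symm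

theorem sum_proj_fst (s : Finset T.W) (c : T.W → ℕ) :
    (∑ g ∈ s, c g • g).1 = ∑ g ∈ s, c g * g.1 := by
  induction s using Finset.cons_induction with
  | empty => rfl
  | cons g s hg ih =>
    rw [Finset.sum_cons, Finset.sum_cons, Prod.fst_add, ih, Prod.smul_fst, smul_eq_mul]

theorem sum_proj_x (s : Finset T.W) (c : T.W → ℕ) :
    T.deg ((∑ g ∈ s, c g • g).2.1) = ∑ g ∈ s, c g * T.deg g.2.1 := by
  induction s using Finset.cons_induction with
  | empty => simp [deg_zero]
  | cons g s hg ih =>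
    rw [Finset.sum_cons, Finset.sum_cons, Prod.snd_add, Prod.fst_add, deg_add, ih,
      Prod.smul_snd, Prod.smul_fst, deg_nsmul]

theorem sum_proj_y (s : Finset T.W) (c : T.W → ℕ) :
    T.deg ((∑ g ∈ s, c g • g).2.2) = ∑ g ∈ s, c g * T.deg g.2.2 := by
  induction s using Finset.cons_induction with
  | empty => simp [deg_zero]
  | cons g s hg ih =>
    rw [Finset.sum_cons, Finset.sum_cons, Prod.snd_add, Prod.snd_add, deg_add, ih,
      Prod.smul_snd, Prod.smul_snd, deg_nsmul]

theorem decomp_stats (a : H) {v : T.W} (hv : v ∈ TT T a) :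
    ∃ c : T.W → ℕ,
      v.1 = (∑ g ∈ (GG_finite T a).toFinset, c g * g.1) ∧
      T.deg v.2.1 = (∑ g ∈ (GG_finite T a).toFinset, c g * T.deg g.2.1) ∧
      T.deg v.2.2 = (∑ g ∈ (GG_finite T a).toFinset, c g * T.deg g.2.2) := by
  obtain ⟨c, hc⟩ := decomp T a (mu T v) v hv le_rfl
  refine ⟨c, ?_, ?_, ?_⟩
  · rw [hc]; exact sum_proj_fst T _ c
  · rw [hc]; exact sum_proj_x T _ c
  · rw [hc]; exact sum_proj_y T _ c

end S8
namespace S8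
variable {H : Type*} [CancelCommMonoid H]

theorem key (T : AtomSetup H) {a : H} (ha : ¬ IsUnit a) :
    ∃ n₀ : ℕ, 0 < n₀ ∧ ∀ t : ℕ, 0 < t →
      elasticity H (a ^ (n₀ * t)) = elasticity H (a ^ n₀) := by
  classical
  obtain ⟨x₁, hx₁⟩ := exists_rep T (Associates.mk a)
  have hv₁ : ((1, x₁, x₁) : T.W) ∈ TT T a :=
    ⟨by rw [pow_one]; exact hx₁, by rw [pow_one]; exact hx₁⟩
  have hv₁0 : ((1, x₁, x₁) : T.W) ≠ 0 := by
    intro h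
    exact one_ne_zero (congrArg Prod.fst h)
  obtain ⟨g₀, hg₀, _⟩ := exists_min_GG T a hv₁ hv₁0
  have hFne : ((GG_finite T a).toFinset).Nonempty := ⟨g₀, (Set.Finite.mem_toFinset _).mpr hg₀⟩
  obtain ⟨gs, hgsF, hgsmax⟩ := Finset.exists_max_image ((GG_finite T a).toFinset)
    (fun g => (T.deg g.2.1 : ℝ) / (T.deg g.2.2 : ℝ)) hFne
  have hgsG : gs ∈ GG T a := (Set.Finite.mem_toFinset _).mp hgsF
  obtain ⟨hn₀pos, hps, hqs⟩ := GG_pos T ha hgsG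
  set r : ℝ := (T.deg gs.2.1 : ℝ) / (T.deg gs.2.2 : ℝ) with hrdef
  have hmax : ∀ g ∈ (GG_finite T a).toFinset,
      (T.deg g.2.1 : ℝ) / (T.deg g.2.2 : ℝ) ≤ r := fun g hg => hgsmax g hg
  have hpow : ∀ n : ℕ, 0 < n → ¬ IsUnit (a ^ n) := by
    intro n hn hu
    exact ha (isUnit_of_dvd_unit (dvd_pow_self a hn.ne') hu)
  -- (A)
  have hA : ∀ n : ℕ, 0 < n → elasticity H (a ^ n) ≤ r := by
    intro n hn
    have hcu : ¬ IsUnit (a ^ n) := hpow n hn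
    obtain ⟨xM, hdM, hφM⟩ := (length_iff T hcu).mp (sSup_mem_ls T hcu)
    obtain ⟨ym, hdm, hφm⟩ := (length_iff T hcu).mp (sInf_mem_ls T hcu)
    rw [Associates.mk_pow] at hφM hφm
    have hvTT : ((n, xM, ym) : T.W) ∈ TT T a := ⟨hφM, hφm⟩
    obtain ⟨c, _, hs2, hs3⟩ := decomp_stats T a hvTT
    have hnat1 : sSup (lengthSet H (a ^ n)) =
        ∑ g ∈ (GG_finite T a).toFinset, c g * T.deg g.2.1 := by rw [← hdM]; exact hs2
    have hnat2 : sInf (lengthSet H (a ^ n)) =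
        ∑ g ∈ (GG_finite T a).toFinset, c g * T.deg g.2.2 := by rw [← hdm]; exact hs3
    have hipos : 1 ≤ sInf (lengthSet H (a ^ n)) := one_le_of_mem T hcu (sInf_mem_ls T hcu)
    have hipos' : (0 : ℝ) < (sInf (lengthSet H (a ^ n)) : ℕ) := by exact_mod_cast hipos
    rw [elasticity_nonunit hcu, div_le_iff₀ hipos']
    rw [hnat1, hnat2]
    push_cast
    rw [Finset.mul_sum]
    refine Finset.sum_le_sum ?_
    intro g hgF
    have hgG : g ∈ GG T a := (Set.Finite.mem_toFinset _).mp hgF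
    obtain ⟨_, hp1, hq1⟩ := GG_pos T ha hgG
    have hq0 : (0 : ℝ) < (T.deg g.2.2 : ℕ) := by exact_mod_cast hq1
    have hple : ((T.deg g.2.1 : ℕ) : ℝ) ≤ r * (T.deg g.2.2 : ℕ) :=
      (div_le_iff₀ hq0).mp (hmax g hgF)
    calc ((c g : ℕ) : ℝ) * (T.deg g.2.1 : ℕ) ≤ ((c g : ℕ) : ℝ) * (r * (T.deg g.2.2 : ℕ)) :=
          mul_le_mul_of_nonneg_left hple (by positivity)
      _ = r * (((c g : ℕ) : ℝ) * (T.deg g.2.2 : ℕ)) := by ring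
  -- (B)
  have hB : r ≤ elasticity H (a ^ gs.1) := by
    have hcu : ¬ IsUnit (a ^ gs.1) := hpow _ hn₀pos
    have hx : T.deg gs.2.1 ∈ lengthSet H (a ^ gs.1) :=
      (length_iff T hcu).mpr ⟨gs.2.1, rfl, by rw [Associates.mk_pow]; exact hgsG.1.1⟩
    have hy : T.deg gs.2.2 ∈ lengthSet H (a ^ gs.1) :=
      (length_iff T hcu).mpr ⟨gs.2.2, rfl, by rw [Associates.mk_pow]; exact hgsG.1.2⟩
    have h1 : T.deg gs.2.1 ≤ sSup (lengthSet H (a ^ gs.1)) :=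
      le_csSup ((lengthSet_finite T _).bddAbove) hx
    have h2 : sInf (lengthSet H (a ^ gs.1)) ≤ T.deg gs.2.2 := Nat.sInf_le hy
    have hi1 : 1 ≤ sInf (lengthSet H (a ^ gs.1)) := one_le_of_mem T hcu (sInf_mem_ls T hcu)
    rw [elasticity_nonunit hcu, hrdef]
    refine div_le_div₀ (by positivity) (by exact_mod_cast h1) (by exact_mod_cast hi1)
      (by exact_mod_cast h2)
  -- (C)
  have hC : ∀ n t : ℕ, 0 < n → 0 < t →
      elasticity H (a ^ n) ≤ elasticity H (a ^ (n * t)) := by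
    intro n t hn ht
    have hcu1 : ¬ IsUnit (a ^ n) := hpow n hn
    have hcu2 : ¬ IsUnit (a ^ (n * t)) := hpow _ (Nat.mul_pos hn ht)
    obtain ⟨xM, hdM, hφM⟩ := (length_iff T hcu1).mp (sSup_mem_ls T hcu1)
    obtain ⟨ym, hdm, hφm⟩ := (length_iff T hcu1).mp (sInf_mem_ls T hcu1)
    have hxM' : T.phi (t • xM) = Associates.mk (a ^ (n * t)) := by
      rw [phi_nsmul, hφM, ← Associates.mk_pow, ← pow_mul]
    have hym' : T.phi (t • ym) = Associates.mk (a ^ (n * t)) := by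
      rw [phi_nsmul, hφm, ← Associates.mk_pow, ← pow_mul]
    have hmemM : t * sSup (lengthSet H (a ^ n)) ∈ lengthSet H (a ^ (n * t)) :=
      (length_iff T hcu2).mpr ⟨t • xM, by rw [deg_nsmul, hdM], hxM'⟩
    have hmemm : t * sInf (lengthSet H (a ^ n)) ∈ lengthSet H (a ^ (n * t)) :=
      (length_iff T hcu2).mpr ⟨t • ym, by rw [deg_nsmul, hdm], hym'⟩
    have h1 : t * sSup (lengthSet H (a ^ n)) ≤ sSup (lengthSet H (a ^ (n * t))) :=
      le_csSup ((lengthSet_finite T _).bddAbove) hmemM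
    have h2 : sInf (lengthSet H (a ^ (n * t))) ≤ t * sInf (lengthSet H (a ^ n)) :=
      Nat.sInf_le hmemm
    have hi1 : 1 ≤ sInf (lengthSet H (a ^ n)) := one_le_of_mem T hcu1 (sInf_mem_ls T hcu1)
    have hi2 : 1 ≤ sInf (lengthSet H (a ^ (n * t))) := one_le_of_mem T hcu2 (sInf_mem_ls T hcu2)
    have ht0 : ((t : ℕ) : ℝ) ≠ 0 := Nat.cast_ne_zero.mpr ht.ne'
    rw [elasticity_nonunit hcu1, elasticity_nonunit hcu2]
    have e1 : ((sSup (lengthSet H (a ^ n)) : ℕ) : ℝ) / ((sInf (lengthSet H (a ^ n)) : ℕ) : ℝ) =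
        ((t * sSup (lengthSet H (a ^ n)) : ℕ) : ℝ) /
          ((t * sInf (lengthSet H (a ^ n)) : ℕ) : ℝ) := by
      push_cast
      rw [mul_div_mul_left _ _ ht0]
    rw [e1]
    refine div_le_div₀ (by positivity) (by exact_mod_cast h1) ?_ (by exact_mod_cast h2)
    have : 1 ≤ sInf (lengthSet H (a ^ (n * t))) := hi2
    exact_mod_cast Nat.lt_of_lt_of_le Nat.zero_lt_one this
  refine ⟨gs.1, hn₀pos, fun t ht => ?_⟩
  exact le_antisymm ((hA _ (Nat.mul_pos hn₀pos ht)).trans hB) (hC _ t hn₀pos ht)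

end S8

/-- If `H_red = H/H^×` is finitely generated, then
`R̄(H) = {ρ(a) : a a nonunit of H with ρ(aᵗ) = ρ(a) for all t ∈ ℕ}`. -/
theorem statement8 (H : Type*) [CancelCommMonoid H]
    (hfg : Monoid.FG (Associates H)) :
    asympSet H = {r : EReal | ∃ a : H, ¬ IsUnit a ∧
      (∀ t : ℕ, 0 < t → elasticity H (a ^ t) = elasticity H a) ∧
      r = ((elasticity H a : ℝ) : EReal)} := by
  obtain ⟨T⟩ := S8.exists_atomSetup hfg
  ext r
  simp only [asympSet, Set.mem_setOf_eq]
  constructor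
  · rintro ⟨a, ha, hlim⟩
    obtain ⟨n₀, hn₀, hkey⟩ := S8.key T ha
    have hbu : ¬ IsUnit (a ^ n₀) := fun hu =>
      ha (isUnit_of_dvd_unit (dvd_pow_self a hn₀.ne') hu)
    refine ⟨a ^ n₀, hbu, ?_, ?_⟩
    · intro t ht
      rw [← pow_mul]
      exact hkey t ht
    · have htend : Tendsto (fun k : ℕ => n₀ * k) atTop atTop :=
        tendsto_atTop_mono (fun k => Nat.le_mul_of_pos_left k hn₀) tendsto_id
      have hsub : Tendsto (fun k : ℕ => ((elasticity H (a ^ (n₀ * k)) : ℝ) : EReal))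
          atTop (nhds r) := hlim.comp htend
      have hconst : Tendsto (fun k : ℕ => ((elasticity H (a ^ (n₀ * k)) : ℝ) : EReal))
          atTop (nhds ((elasticity H (a ^ n₀) : ℝ) : EReal)) := by
        apply Tendsto.congr' ?_ tendsto_const_nhds
        filter_upwards [eventually_ge_atTop 1] with k hk
        exact congrArg _ (hkey k hk).symm
      exact tendsto_nhds_unique hsub hconst
  · rintro ⟨a, ha, hconst, rfl⟩
    refine ⟨a, ha, ?_⟩
    apply Tendsto.congr' ?_ tendsto_const_nhds
    filter_upwards [eventually_ge_atTop 1] with n hn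
    exact congrArg _ (hconst n hn).symm
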